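/- Let H be a complex Hilbert space, R ≥ 0 an integer, and (T_α) a net of bounded operators on H converging to X ∈ B(H) in the weak operator topology. If rank(T_α) ≤ R for every α, then rank(X) ≤ R. -/

import Mathlib

open Filter Topology
open scoped InnerProductSpace

/-- If a net `(T_α)` of bounded operators on a complex Hilbert space converges to `X` in the
weak operator topology and `rank (T_α) ≤ R` for every `α`, then `rank X ≤ R`. -/
theorem rank_le_of_wot_limit
    (H : Type*) [NormedAddCommGroup H] [InnerProductSpace ℂ H] [CompleteSpace H]
    (R : ℕ) {ι : Type*} (l : Filter ι) [l.NeBot]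
    (T : ι → (H →L[ℂ] H)) (X : H →L[ℂ] H)
    (hconv : ∀ ξ η : H, Tendsto (fun α => ⟪η, T α ξ⟫_ℂ) l (𝓝 ⟪η, X ξ⟫_ℂ))
    (hrank : ∀ α, LinearMap.rank ((T α : H →L[ℂ] H) : H →ₗ[ℂ] H) ≤ (R : Cardinal)) :
    LinearMap.rank ((X : H →L[ℂ] H) : H →ₗ[ℂ] H) ≤ (R : Cardinal) := by
  by_contra hlt
  rw [not_le] at hlt
  have h1 : ((R + 1 : ℕ) : Cardinal) ≤ LinearMap.rank ((X : H →L[ℂ] H) : H →ₗ[ℂ] H) := by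
    rw [Cardinal.nat_succ]
    exact Order.succ_le_of_lt hlt
  obtain ⟨s, hcard, hli⟩ := LinearMap.le_rank_iff_exists_linearIndependent_finset.mp h1
  -- turn the finset into an indexed family
  let e : Fin (R + 1) ≃ (s : Set H) :=
    (Fintype.equivFinOfCardEq (by simpa using hcard)).symm
  set ξ : Fin (R + 1) → H := fun i => (e i : H) with hξ
  set v : Fin (R + 1) → H := fun i => X (ξ i) with hv
  have hliv : LinearIndependent ℂ v := hli.comp e e.injective
  -- Gram matrix and approximating matrices
  set G : Matrix (Fin (R + 1)) (Fin (R + 1)) ℂ := fun i j => ⟪v i, v j⟫_ℂ with hG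
  set M : ι → Matrix (Fin (R + 1)) (Fin (R + 1)) ℂ :=
    fun α => fun i j => ⟪v i, T α (ξ j)⟫_ℂ with hM
  -- each M α has zero determinant
  have hdetM : ∀ α, (M α).det = 0 := by
    intro α
    have hdep : ¬ LinearIndependent ℂ (fun j : Fin (R + 1) =>
        (⟨T α (ξ j), LinearMap.mem_range_self _ _⟩ :
          LinearMap.range ((T α : H →L[ℂ] H) : H →ₗ[ℂ] H))) := by
      intro hind
      have h1 := hind.cardinal_lift_le_rank
      have h2 := h1.trans (Cardinal.lift_le.mpr (hrank α))
      simp only [Cardinal.mk_fin, Cardinal.lift_natCast, Nat.cast_le] at h2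
      omega
    rw [Fintype.not_linearIndependent_iff] at hdep
    obtain ⟨g, hg, i0, hi0⟩ := hdep
    have hsum : ∑ j, g j • T α (ξ j) = 0 := by
      have := congrArg (Submodule.subtype _) hg
      simpa using this
    refine Matrix.exists_mulVec_eq_zero_iff.mp ⟨g, fun h => hi0 (by simp [h]), ?_⟩
    funext i
    simp only [Matrix.mulVec, dotProduct, hM]
    have : ⟪v i, ∑ j, g j • T α (ξ j)⟫_ℂ = 0 := by rw [hsum, inner_zero_right]
    rw [inner_sum] at this
    simpa [inner_smul_right, mul_comm] using this
  -- determinant of the Gram matrix is nonzero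
  have hdetG : G.det ≠ 0 := by
    intro h0
    obtain ⟨c, hc, hmc⟩ := Matrix.exists_mulVec_eq_zero_iff.mpr h0
    set w : H := ∑ j, c j • v j with hw
    have horth : ∀ i, ⟪v i, w⟫_ℂ = 0 := by
      intro i
      have := congrFun hmc i
      simp only [Matrix.mulVec, dotProduct, Pi.zero_apply] at this
      rw [hw, inner_sum]
      simpa [inner_smul_right, mul_comm] using this
    have hw0 : w = 0 := by
      have : ⟪w, w⟫_ℂ = 0 := by
        rw [hw, sum_inner]
        simp only [inner_smul_left]
        exact Finset.sum_eq_zero fun i _ => by rw [horth i, mul_zero]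
      exact inner_self_eq_zero.mp this
    have := linearIndependent_iff'.mp hliv Finset.univ c (by simpa [hw] using hw0)
    exact hc (funext fun i => this i (Finset.mem_univ i))
  -- convergence of determinants
  have hMt : Tendsto M l (𝓝 G) := by
    refine tendsto_pi_nhds.mpr ?_
    intro i
    rw [tendsto_pi_nhds]
    intro j
    exact hconv (ξ j) (v i)
  have hdet : Tendsto (fun α => (M α).det) l (𝓝 G.det) :=
    ((continuous_id.matrix_det).continuousAt.tendsto).comp hMt
  have : Tendsto (fun α => (M α).det) l (𝓝 0) := by
    simpa [hdetM] using tendsto_const_nhds (α := ℂ) (f := l) (a := 0)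
  exact hdetG (tendsto_nhds_unique hdet this)
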